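/- Let $n, k$ be positive integers with $\gcd(k,n)=1$ and let $F$ be a finite field with $2^n$ elements. Let $\beta, \gamma \in F$ with $\beta \neq 0$. Then the equation $\beta r^{2^k+1} + \beta^{2^k} r^{2^k} + \gamma r + \beta^{2^{2k}} = 0$ has at most three solutions $r \in F$. -/

import Mathlib

theorem stmt_10 (n k : ℕ) (hn : 0 < n) (hk : 0 < k) (hgcd : Nat.gcd k n = 1)
    (F : Type*) [Field F] [Fintype F] (hF : Fintype.card F = 2 ^ n)
    (β γ : F) (hβ : β ≠ 0) :
    {r : F | β * r ^ (2 ^ k + 1) + β ^ (2 ^ k) * r ^ (2 ^ k) + γ * r + β ^ (2 ^ (2 * k)) = 0}.ncard ≤ 3 := by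
  classical
  -- characteristic 2
  have h2 : (2 : F) = 0 := by
    have h := FiniteField.cast_card_eq_zero F
    rw [hF] at h
    push_cast at h
    exact pow_eq_zero_iff hn.ne' |>.mp h
  haveI : CharP F 2 := by
    have h : ringChar F = 2 :=
      CharP.ringChar_of_prime_eq_zero Nat.prime_two (by exact_mod_cast h2)
    exact h ▸ ringChar.charP F
  haveI : Fact (Nat.Prime 2) := ⟨Nat.prime_two⟩
  have hadd0 : ∀ a b : F, a + b = 0 → a = b := fun a b h => by
    rw [← CharTwo.neg_eq b]; exact eq_neg_of_add_eq_zero_left h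
  rcases eq_or_lt_of_le (show 1 ≤ n from hn) with hn1 | hn1
  · -- n = 1 : |F| = 2, trivial bound
    have hcard : Fintype.card F = 2 := by rw [hF, ← hn1]; norm_num
    have hle := Set.ncard_le_ncard (Set.subset_univ
      {r : F | β * r ^ (2 ^ k + 1) + β ^ (2 ^ k) * r ^ (2 ^ k) + γ * r + β ^ (2 ^ (2 * k)) = 0})
      Set.finite_univ
    rw [Set.ncard_univ, Nat.card_eq_fintype_card, hcard] at hle
    omega
  set q := 2 ^ k with hq
  have frob : ∀ x y : F, (x + y) ^ q = x ^ q + y ^ q := fun x y => add_pow_char_pow x y 2 k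
  -- fixed points of the k-th power Frobenius are 0 and 1
  have hfix : ∀ w : F, w ≠ 0 → w ^ q = w → w = 1 := by
    intro w hw hwq
    have hit : ∀ m : ℕ, w ^ (2 ^ (k * m)) = w := by
      intro m
      induction m with
      | zero => simp
      | succ m ih => rw [Nat.mul_succ, pow_add, pow_mul, ih]; exact hwq
    have hitn : ∀ m : ℕ, w ^ (2 ^ (n * m)) = w := by
      intro m
      induction m with
      | zero => simp
      | succ m ih =>
        rw [Nat.mul_succ, pow_add, pow_mul, ih, ← hF]
        exact FiniteField.pow_card w
    obtain ⟨a, -, ha⟩ := Nat.exists_mul_mod_eq_one_of_coprime (hgcd : Nat.Coprime k n) hn1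
    have hdiv : n * (k * a / n) + 1 = k * a := by
      conv_rhs => rw [← Nat.div_add_mod (k * a) n]
      rw [ha]
    have e1 := hit a
    rw [← hdiv, pow_succ, pow_mul, hitn] at e1
    exact mul_left_cancel₀ hw (by rw [mul_one, ← sq]; exact e1)
  -- uniqueness of nonzero solutions of A v^q = B v
  have hker : ∀ A B v1 v2 : F, A ≠ 0 → v1 ≠ 0 → v2 ≠ 0 →
      A * v1 ^ q = B * v1 → A * v2 ^ q = B * v2 → v1 = v2 := by
    intro A B v1 v2 hA h1 h2' e1 e2
    have hvq : v1 ^ q * v2 = v1 * v2 ^ q := by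
      apply mul_left_cancel₀ hA
      linear_combination v2 * e1 - v1 * e2
    have hwq : (v1 * v2⁻¹) ^ q = v1 * v2⁻¹ := by
      rw [mul_pow, inv_pow]
      field_simp
      linear_combination hvq
    have := hfix _ (mul_ne_zero h1 (inv_ne_zero h2')) hwq
    field_simp at this
    exact this
  -- rewrite the constant term
  have h2k : (2 : ℕ) ^ (2 * k) = q * q := by rw [hq, ← pow_add, two_mul]
  simp only [h2k, pow_mul]
  set S := {r : F | β * r ^ (q + 1) + β ^ q * r ^ q + γ * r + (β ^ q) ^ q = 0} with hSdef
  rcases S.eq_empty_or_nonempty with hS | ⟨r0, hr0⟩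
  · rw [hS]; simp
  have hr0' : β * r0 ^ (q + 1) + β ^ q * r0 ^ q + γ * r0 + (β ^ q) ^ q = 0 := hr0
  set A := β * r0 ^ q + γ with hA
  set B := β * r0 + β ^ q with hB
  set T := {u : F | A * u ^ q + B * u = β} with hT
  have hzne : ∀ r ∈ S \ {r0}, r + r0 ≠ 0 := by
    intro r hr h
    exact (Set.mem_diff_singleton.mp hr).2 (hadd0 _ _ h)
  -- the map r ↦ (r + r0)⁻¹ sends S \ {r0} into T
  have hmap : ∀ r ∈ S \ {r0}, (r + r0)⁻¹ ∈ T := by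
    intro r hr
    have hz := hzne r hr
    have hrS : β * r ^ (q + 1) + β ^ q * r ^ q + γ * r + (β ^ q) ^ q = 0 :=
      (Set.mem_diff_singleton.mp hr).1
    have key : A * (r + r0) + B * ((r + r0)) ^ q = β * ((r + r0) ^ q * (r + r0)) := by
      rw [frob]
      rw [pow_succ] at hrS hr0'
      linear_combination hrS + hr0' - (β * r ^ q * r + (β ^ q) ^ q) * h2
    show A * ((r + r0)⁻¹) ^ q + B * (r + r0)⁻¹ = β
    rw [inv_pow]
    have hzq : (r + r0) ^ q ≠ 0 := pow_ne_zero _ hz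
    field_simp
    linear_combination key
  have hinj : Set.InjOn (fun r => (r + r0)⁻¹) (S \ {r0}) := by
    intro r1 h1 r2 h2' he
    have := inv_injective he
    exact add_right_cancel this
  have hstep1 : (S \ {r0}).ncard ≤ T.ncard :=
    Set.ncard_le_ncard_of_injOn _ hmap hinj (Set.toFinite T)
  -- T has at most two elements
  have hstep2 : T.ncard ≤ 2 := by
    rcases T.eq_empty_or_nonempty with hTe | ⟨u0, hu0⟩
    · rw [hTe]; simp
    have hu0' : A * u0 ^ q + B * u0 = β := hu0
    by_cases hA0 : A = 0
    · have hB0 : B ≠ 0 := by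
        intro hB0
        rw [hA0, hB0] at hu0'
        simp at hu0'
        exact hβ hu0'.symm
      have hsub : T ⊆ {B⁻¹ * β} := by
        intro u hu
        have hu' : A * u ^ q + B * u = β := hu
        rw [hA0] at hu'
        simp only [zero_mul, zero_add] at hu'
        simp only [Set.mem_singleton_iff]
        field_simp
        linear_combination hu'
      have := Set.ncard_le_ncard hsub (Set.toFinite _)
      rw [Set.ncard_singleton] at this
      omega
    · have hker2 : ∀ u' : F, u' ∈ T → A * (u' + u0) ^ q = B * (u' + u0) := by
        intro u' hu'
        have hu'' : A * u' ^ q + B * u' = β := hu'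
        rw [frob]
        linear_combination hu'' - hu0' + (A * u0 ^ q - B * u') * h2
      by_cases htwo : ∃ u1 ∈ T, u1 ≠ u0
      · obtain ⟨u1, hu1, hne⟩ := htwo
        have hsub : T ⊆ {u0, u1} := by
          intro u hu
          by_contra hcon
          simp only [Set.mem_insert_iff, Set.mem_singleton_iff, not_or] at hcon
          have hv1 : u + u0 ≠ 0 := fun h => hcon.1 (hadd0 _ _ h)
          have hv2 : u1 + u0 ≠ 0 := fun h => hne (hadd0 _ _ h)
          have := hker A B (u + u0) (u1 + u0) hA0 hv1 hv2 (hker2 u hu) (hker2 u1 hu1)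
          exact hcon.2 (add_right_cancel this)
        have hle := Set.ncard_le_ncard hsub (Set.toFinite _)
        have : ({u0, u1} : Set F).ncard = 2 := Set.ncard_pair (fun h => hne h.symm)
        omega
      · push_neg at htwo
        have hsub : T ⊆ {u0} := fun u hu => htwo u hu
        have := Set.ncard_le_ncard hsub (Set.toFinite _)
        rw [Set.ncard_singleton] at this
        omega
  have hsub : S ⊆ insert r0 (S \ {r0}) := by
    intro x hx
    by_cases hx0 : x = r0 <;> simp [hx0, hx]
  calc S.ncard ≤ (insert r0 (S \ {r0})).ncard := Set.ncard_le_ncard hsub (Set.toFinite _)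
    _ ≤ (S \ {r0}).ncard + 1 := Set.ncard_insert_le _ _
    _ ≤ T.ncard + 1 := by omega
    _ ≤ 3 := by omega
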